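/- Let A be a compact metric space. For each n, let X_1^n, ..., X_n^n be pairwise independent A-valued random variables with laws μ_i^n, S_n = (1/n)∑_i δ_{X_i^n} the empirical measure, and s_n = (1/n)∑_i μ_i^n. Then β(S_n, s_n) → 0 in probability as n → ∞, where β is the dual bounded-Lipschitz metric on 𝒫(A). -/

import Mathlib

open MeasureTheory ProbabilityTheory Filter Topology

/-- The dual bounded-Lipschitz distance between the empirical measure of pairwise
independent random variables and their mean measure tends to 0 in probability:
for every ε > 0, the probability that some h in the bounded-Lipschitz unit ball
separates them by more than ε tends to 0. -/
theorem beta_empirical_to_mean_in_probability {A : Type*} [MetricSpace A] [CompactSpace A]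
    [MeasurableSpace A] [BorelSpace A]
    {Ω : Type*} [MeasurableSpace Ω] (P : Measure Ω) [IsProbabilityMeasure P]
    (X : (n : ℕ) → Fin n → Ω → A)
    (hmeas : ∀ n i, Measurable (X n i))
    (hindep : ∀ n, ∀ i j : Fin n, i ≠ j → IndepFun (X n i) (X n j) P)
    (ε : ℝ) (hε : 0 < ε) :
    Tendsto
      (fun n : ℕ =>
        P {ω | ∃ h : A → ℝ,
          (∃ (M : ℝ) (L : NNReal), (∀ a, |h a| ≤ M) ∧ LipschitzWith L h ∧ M + (L : ℝ) ≤ 1) ∧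
          ε < |(1 / (n : ℝ)) * ∑ i : Fin n, (h (X n i ω) - ∫ ω', h (X n i ω') ∂P)|})
      atTop (nhds 0) := by
  classical
  by_cases hA : Nonempty A
  case neg =>
    have hempty : ∀ n : ℕ,
        {ω | ∃ h : A → ℝ,
          (∃ (M : ℝ) (L : NNReal), (∀ a, |h a| ≤ M) ∧ LipschitzWith L h ∧ M + (L : ℝ) ≤ 1) ∧
          ε < |(1 / (n : ℝ)) * ∑ i : Fin n, (h (X n i ω) - ∫ ω', h (X n i ω') ∂P)|}
          = (∅ : Set Ω) := by
      intro n
      ext ω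
      simp only [Set.mem_setOf_eq, Set.mem_empty_iff_false, iff_false, not_exists]
      intro h hh
      rcases Nat.eq_zero_or_pos n with hn | hn
      · subst hn
        simp only [Nat.cast_zero, Finset.univ_eq_empty, Finset.sum_empty, mul_zero, abs_zero] at hh
        linarith [hh.2]
      · exact hA ⟨X n ⟨0, hn⟩ ω⟩
    simp only [hempty, measure_empty]
    exact tendsto_const_nhds
  obtain ⟨a₀⟩ := hA
  set δ : ℝ := ε / 16 with hδdef
  have hδ : 0 < δ := by positivity
  -- finite δ-net on A
  obtain ⟨tA, htAsub, htAfin, htAcov⟩ :=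
    finite_cover_balls_of_compact (isCompact_univ : IsCompact (Set.univ : Set A)) hδ
  set T : Finset A := htAfin.toFinset with hTdef
  have hTcov : ∀ x : A, ∃ a ∈ T, dist x a < δ := by
    intro x
    have hx := htAcov (Set.mem_univ x)
    simp only [Set.mem_iUnion, Metric.mem_ball, exists_prop] at hx
    obtain ⟨a, ha, hxa⟩ := hx
    exact ⟨a, htAfin.mem_toFinset.2 ha, hxa⟩
  have hTne : T.Nonempty := by
    obtain ⟨a, ha, -⟩ := hTcov a₀; exact ⟨a, ha⟩
  have hTane : T.attach.Nonempty := Finset.attach_nonempty_iff.2 hTne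
  -- finite δ-grid on [-1,1]
  obtain ⟨G0, hG0sub, hG0fin, hG0cov⟩ :=
    finite_cover_balls_of_compact (isCompact_Icc : IsCompact (Set.Icc (-1:ℝ) 1)) hδ
  set G : Finset ℝ := hG0fin.toFinset with hGdef
  have hGsub : ∀ r ∈ G, r ∈ Set.Icc (-1:ℝ) 1 := fun r hr => hG0sub (hG0fin.mem_toFinset.1 hr)
  have hGcov : ∀ r ∈ Set.Icc (-1:ℝ) 1, ∃ u ∈ G, |r - u| < δ := by
    intro r hr
    have hx := hG0cov hr
    simp only [Set.mem_iUnion, Metric.mem_ball, exists_prop] at hx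
    obtain ⟨u, hu, hru⟩ := hx
    exact ⟨u, hG0fin.mem_toFinset.2 hu, by simpa [Real.dist_eq] using hru⟩
  -- the finite family of approximating functions
  set ι := (↥T → ↥G) with hιdef
  set g : ι → A → ℝ := fun v x => T.attach.inf' hTane (fun a => (v a : ℝ) + dist x (a : A))
    with hgdef
  have hg_le : ∀ (v : ι) (x : A) (a : ↥T), g v x ≤ (v a : ℝ) + dist x (a : A) :=
    fun v x a => Finset.inf'_le _ (Finset.mem_attach T a)
  have hg_ge : ∀ (v : ι) (x : A) (r : ℝ), (∀ a : ↥T, r ≤ (v a : ℝ) + dist x (a : A)) →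
      r ≤ g v x := fun v x r hr => Finset.le_inf' _ _ (fun a _ => hr a)
  have hgkey : ∀ (v : ι) (x y : A), g v x ≤ g v y + dist x y := by
    intro v x y
    obtain ⟨a, -, ha⟩ := Finset.exists_mem_eq_inf' hTane
      (fun a : ↥T => (v a : ℝ) + dist y (a : A))
    have hy : g v y = (v a : ℝ) + dist y (a : A) := ha
    have h1 := hg_le v x a
    have h2 := dist_triangle x y (a : A)
    rw [hy]; linarith
  have hglip : ∀ v : ι, LipschitzWith 1 (g v) := by
    intro v
    apply LipschitzWith.of_dist_le_mul
    intro x y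
    rw [NNReal.coe_one, one_mul, Real.dist_eq, abs_sub_le_iff]
    constructor
    · have := hgkey v x y; linarith
    · have := hgkey v y x; rw [dist_comm] at this; linarith
  set C : ℝ := 1 + Metric.diam (Set.univ : Set A) with hCdef
  have hC1 : 1 ≤ C := le_add_of_nonneg_right Metric.diam_nonneg
  have hgbound : ∀ (v : ι) (x : A), |g v x| ≤ C := by
    intro v x
    obtain ⟨b, hb⟩ := hTne
    have hub : g v x ≤ C := by
      have h1 := hg_le v x ⟨b, hb⟩
      have h2 := (hGsub _ (v ⟨b, hb⟩).2).2
      have h3 : dist x b ≤ Metric.diam (Set.univ : Set A) :=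
        Metric.dist_le_diam_of_mem isCompact_univ.isBounded trivial trivial
      rw [hCdef]; linarith
    have hlb : -C ≤ g v x := by
      apply hg_ge
      intro a
      have h1 := (hGsub _ (v a).2).1
      have h2 : (0:ℝ) ≤ dist x (a : A) := dist_nonneg
      linarith
    exact abs_le.2 ⟨hlb, hub⟩
  have happrox : ∀ h : A → ℝ, (∀ a, |h a| ≤ 1) → (∀ x y, dist (h x) (h y) ≤ dist x y) →
      ∃ v : ι, ∀ x, |h x - g v x| ≤ 3 * δ := by
    intro h hb hlip
    have hchoice : ∀ a : ↥T, ∃ u : ↥G, |h (a : A) - (u : ℝ)| < δ := by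
      intro a
      obtain ⟨u, hu, h1⟩ := hGcov (h a) (by
        have := abs_le.1 (hb a); exact ⟨this.1, this.2⟩)
      exact ⟨⟨u, hu⟩, h1⟩
    choose v hv using hchoice
    refine ⟨v, fun x => abs_le.2 ⟨?_, ?_⟩⟩
    · -- -(3δ) ≤ h x - g v x, i.e. g v x ≤ h x + 3δ
      obtain ⟨a, haT, hax⟩ := hTcov x
      have h1 := hg_le v x ⟨a, haT⟩
      have h2 := abs_lt.1 (hv ⟨a, haT⟩)
      have h3 := hlip x a
      rw [Real.dist_eq] at h3
      have h3' := abs_le.1 h3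
      simp only at h1 h2
      linarith [h3'.1, h3'.2, h2.1, h2.2]
    · -- h x - g v x ≤ 3δ, since h x - δ ≤ g v x
      have hge : h x - δ ≤ g v x := by
        apply hg_ge
        intro a
        have h2 := abs_lt.1 (hv a)
        have h3 := hlip x (a : A)
        rw [Real.dist_eq] at h3
        have h3' := abs_le.1 h3
        linarith [h3'.1, h3'.2, h2.1, h2.2]
      linarith
  -- constants for the union bound
  set B0 : ℝ := C ^ 2 / (ε / 2) ^ 2 with hB0def
  set K : ℕ := Fintype.card ι with hKdef
  set B : ℝ := K * B0 with hBdef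
  have hmain : ∀ n : ℕ, 1 ≤ n →
      P {ω | ∃ h : A → ℝ,
          (∃ (M : ℝ) (L : NNReal), (∀ a, |h a| ≤ M) ∧ LipschitzWith L h ∧ M + (L : ℝ) ≤ 1) ∧
          ε < |(1 / (n : ℝ)) * ∑ i : Fin n, (h (X n i ω) - ∫ ω', h (X n i ω') ∂P)|}
        ≤ ENNReal.ofReal (B / n) := by
    intro n hn
    have hn0 : (n : ℝ) ≠ 0 := Nat.cast_ne_zero.2 (by omega)
    have hnpos : (0:ℝ) < n := by positivity
    set E : ι → Set Ω := fun v =>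
      {ω | ε / 2 ≤ |(1 / (n : ℝ)) * ∑ i : Fin n,
        (g v (X n i ω) - ∫ ω', g v (X n i ω') ∂P)|} with hEdef
    -- integrability facts
    have hgint : ∀ (v : ι) (i : Fin n), Integrable (fun ω' => g v (X n i ω')) P := by
      intro v i
      refine memLp_one_iff_integrable.1 (MemLp.of_bound
        (((hglip v).continuous.measurable).comp (hmeas n i)).aestronglyMeasurable C
        (Filter.Eventually.of_forall (fun ω' => ?_)))
      rw [Real.norm_eq_abs]; exact hgbound v _
    -- Chebyshev bound for each v
    have hEbound : ∀ v : ι, P (E v) ≤ ENNReal.ofReal (B0 / n) := by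
      intro v
      set W : Fin n → Ω → ℝ := fun i ω => g v (X n i ω) with hWdef
      have hWmeas : ∀ i, Measurable (W i) :=
        fun i => ((hglip v).continuous.measurable).comp (hmeas n i)
      have hWb : ∀ i ω, |W i ω| ≤ C := fun i ω => hgbound v _
      have hW2 : ∀ i, MemLp (W i) 2 P := fun i =>
        MemLp.of_bound (hWmeas i).aestronglyMeasurable C
          (Filter.Eventually.of_forall (fun ω => by rw [Real.norm_eq_abs]; exact hWb i ω))
      have hWint : ∀ i, Integrable (W i) P := fun i => (hW2 i).integrable one_le_two
      set Z : Ω → ℝ := fun ω => (1 / (n : ℝ)) * ∑ i, W i ω with hZdef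
      have hZfun : Z = (1 / (n : ℝ)) • (∑ i : Fin n, W i) := by
        funext ω
        simp [hZdef, Finset.sum_apply]
      have hZ2 : MemLp Z 2 P := by
        rw [hZfun]
        exact (memLp_finset_sum' _ (fun i _ => hW2 i)).const_smul _
      have hEZ : P[Z] = (1 / (n : ℝ)) * ∑ i, P[W i] := by
        simp only [hZdef]
        rw [integral_const_mul, integral_finset_sum _ (fun i _ => hWint i)]
      have hdiff : ∀ ω, Z ω - P[Z] = (1 / (n : ℝ)) * ∑ i, (W i ω - P[W i]) := by
        intro ω
        rw [hEZ]
        simp only [hZdef]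
        rw [Finset.sum_sub_distrib, mul_sub]
      have hEset : E v = {ω | ε / 2 ≤ |Z ω - P[Z]|} := by
        ext ω
        simp only [hEdef, Set.mem_setOf_eq, hdiff ω, hWdef]
      have hvar : variance Z P ≤ C ^ 2 / n := by
        have h1 : variance Z P = (1 / (n : ℝ)) ^ 2 * variance (∑ i, W i) P := by
          rw [hZfun, variance_smul]
        have h2 : variance (∑ i, W i) P = ∑ i, variance (W i) P :=
          IndepFun.variance_sum (fun i _ => hW2 i)
            (fun i _ j _ hij => (hindep n i j hij).comp
              (hglip v).continuous.measurable (hglip v).continuous.measurable)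
        have h3 : ∀ i : Fin n, variance (W i) P ≤ C ^ 2 := by
          intro i
          refine (variance_le_expectation_sq (hWmeas i).aestronglyMeasurable).trans ?_
          have hint2 : Integrable ((W i) ^ 2) P := (hW2 i).integrable_sq
          calc P[(W i) ^ 2] ≤ ∫ ω2, C ^ 2 ∂P := by
                refine integral_mono hint2 (integrable_const _) (fun ω => ?_)
                have := hWb i ω
                simp only [Pi.pow_apply]
                nlinarith [sq_abs (W i ω), abs_nonneg (W i ω)]
            _ = C ^ 2 := by simp
        have h4 : ∑ i : Fin n, variance (W i) P ≤ n * C ^ 2 := by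
          calc ∑ i : Fin n, variance (W i) P ≤ ∑ i2 : Fin n, C ^ 2 :=
                Finset.sum_le_sum (fun i _ => h3 i)
            _ = n * C ^ 2 := by simp [mul_comm]
        have h5 : (0:ℝ) ≤ (1 / (n : ℝ)) ^ 2 := by positivity
        calc variance Z P = (1 / (n : ℝ)) ^ 2 * variance (∑ i, W i) P := h1
          _ ≤ (1 / (n : ℝ)) ^ 2 * (n * C ^ 2) := by
              rw [h2]; exact mul_le_mul_of_nonneg_left h4 h5
          _ = C ^ 2 / n := by field_simp
      calc P (E v) = P {ω | ε / 2 ≤ |Z ω - P[Z]|} := by rw [hEset]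
        _ ≤ ENNReal.ofReal (variance Z P / (ε / 2) ^ 2) :=
            meas_ge_le_variance_div_sq hZ2 (by positivity)
        _ ≤ ENNReal.ofReal (B0 / n) := by
            apply ENNReal.ofReal_le_ofReal
            have h7 : (0:ℝ) < (ε / 2) ^ 2 := by positivity
            have h8 : variance Z P / (ε / 2) ^ 2 ≤ (C ^ 2 / n) / (ε / 2) ^ 2 := by
              gcongr
            have h9 : (C ^ 2 / n) / (ε / 2) ^ 2 = B0 / n := by
              rw [hB0def]; ring
            linarith
    -- the inclusion into the union of events
    have hsub : {ω | ∃ h : A → ℝ,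
          (∃ (M : ℝ) (L : NNReal), (∀ a, |h a| ≤ M) ∧ LipschitzWith L h ∧ M + (L : ℝ) ≤ 1) ∧
          ε < |(1 / (n : ℝ)) * ∑ i : Fin n, (h (X n i ω) - ∫ ω', h (X n i ω') ∂P)|}
        ⊆ ⋃ v : ι, E v := by
      rintro ω ⟨h, ⟨M, L, hM, hLip, hML⟩, hgt⟩
      have hM0 : 0 ≤ M := (abs_nonneg _).trans (hM a₀)
      have hL0 : (0:ℝ) ≤ (L : ℝ) := L.2
      have hb1 : ∀ a, |h a| ≤ 1 := fun a => (hM a).trans (by linarith)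
      have hlip1 : ∀ x y, dist (h x) (h y) ≤ dist x y := by
        intro x y
        calc dist (h x) (h y) ≤ (L : ℝ) * dist x y := hLip.dist_le_mul x y
          _ ≤ 1 * dist x y := mul_le_mul_of_nonneg_right (by linarith) dist_nonneg
          _ = dist x y := one_mul _
      obtain ⟨v, hv⟩ := happrox h hb1 hlip1
      refine Set.mem_iUnion.2 ⟨v, ?_⟩
      have hint_h : ∀ i : Fin n, Integrable (fun ω' => h (X n i ω')) P := by
        intro i
        refine memLp_one_iff_integrable.1 (MemLp.of_bound
          (((LipschitzWith.of_dist_le_mul (fun x y => by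
            simpa using hlip1 x y)).continuous (K := 1)).measurable.comp
              (hmeas n i)).aestronglyMeasurable 1
          (Filter.Eventually.of_forall (fun ω' => ?_)))
        rw [Real.norm_eq_abs]; exact hb1 _
      have hEdiffb : ∀ i : Fin n,
          |(∫ ω', h (X n i ω') ∂P) - ∫ ω', g v (X n i ω') ∂P| ≤ 3 * δ := by
        intro i
        rw [← integral_sub (hint_h i) (hgint v i)]
        have := norm_integral_le_of_norm_le_const (μ := P)
          (f := fun ω' => h (X n i ω') - g v (X n i ω')) (C := 3 * δ)
          (Filter.Eventually.of_forall (fun ω' => by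
            rw [Real.norm_eq_abs]; exact hv _))
        simpa using this
      have hterm : ∀ i : Fin n,
          |(h (X n i ω) - ∫ ω', h (X n i ω') ∂P) -
            (g v (X n i ω) - ∫ ω', g v (X n i ω') ∂P)| ≤ 6 * δ := by
        intro i
        have h1 := hv (X n i ω)
        have h2 := hEdiffb i
        calc |(h (X n i ω) - ∫ ω', h (X n i ω') ∂P) -
              (g v (X n i ω) - ∫ ω', g v (X n i ω') ∂P)|
            = |(h (X n i ω) - g v (X n i ω)) +
              ((∫ ω', g v (X n i ω') ∂P) - ∫ ω', h (X n i ω') ∂P)| := by ring_nf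
          _ ≤ |h (X n i ω) - g v (X n i ω)| +
              |(∫ ω', g v (X n i ω') ∂P) - ∫ ω', h (X n i ω') ∂P| := abs_add_le _ _
          _ ≤ 3 * δ + 3 * δ := by
              refine add_le_add h1 ?_
              rw [abs_sub_comm]; exact h2
          _ = 6 * δ := by ring
      -- the averaged bound
      set Sa : ℝ := ∑ i : Fin n, (h (X n i ω) - ∫ ω', h (X n i ω') ∂P) with hSa
      set Sb : ℝ := ∑ i : Fin n, (g v (X n i ω) - ∫ ω', g v (X n i ω') ∂P) with hSb
      have hSab : |Sa - Sb| ≤ n * (6 * δ) := by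
        rw [hSa, hSb, ← Finset.sum_sub_distrib]
        calc |∑ i : Fin n, ((h (X n i ω) - ∫ ω', h (X n i ω') ∂P) -
              (g v (X n i ω) - ∫ ω', g v (X n i ω') ∂P))|
            ≤ ∑ i : Fin n, |(h (X n i ω) - ∫ ω', h (X n i ω') ∂P) -
              (g v (X n i ω) - ∫ ω', g v (X n i ω') ∂P)| := Finset.abs_sum_le_sum_abs _ _
          _ ≤ ∑ i2 : Fin n, 6 * δ := Finset.sum_le_sum (fun i _ => hterm i)
          _ = n * (6 * δ) := by simp [mul_comm]
      have habs : |Sa| ≤ |Sb| + n * (6 * δ) := by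
        calc |Sa| = |Sb + (Sa - Sb)| := by ring_nf
          _ ≤ |Sb| + |Sa - Sb| := abs_add_le _ _
          _ ≤ |Sb| + n * (6 * δ) := by linarith
      have hkey : |(1 / (n : ℝ)) * Sa| ≤ |(1 / (n : ℝ)) * Sb| + 6 * δ := by
        have hpos : (0:ℝ) ≤ 1 / (n : ℝ) := by positivity
        rw [abs_mul, abs_mul, abs_of_nonneg hpos]
        have : (1 / (n : ℝ)) * ((n : ℝ) * (6 * δ)) = 6 * δ := by field_simp
        nlinarith [habs]
      show ε / 2 ≤ |(1 / (n : ℝ)) * Sb|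
      have h6 : 6 * δ = 6 * ε / 16 := by rw [hδdef]; ring
      rw [hSa] at hkey
      linarith [hgt]
    -- union bound
    calc P {ω | ∃ h : A → ℝ,
          (∃ (M : ℝ) (L : NNReal), (∀ a, |h a| ≤ M) ∧ LipschitzWith L h ∧ M + (L : ℝ) ≤ 1) ∧
          ε < |(1 / (n : ℝ)) * ∑ i : Fin n, (h (X n i ω) - ∫ ω', h (X n i ω') ∂P)|}
        ≤ P (⋃ v : ι, E v) := measure_mono hsub
      _ ≤ ∑ v : ι, P (E v) := measure_iUnion_fintype_le _ _
      _ ≤ ∑ v : ι, ENNReal.ofReal (B0 / n) := Finset.sum_le_sum (fun v _ => hEbound v)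
      _ = (K : ENNReal) * ENNReal.ofReal (B0 / n) := by
          simp [hKdef, Finset.sum_const, nsmul_eq_mul]
      _ = ENNReal.ofReal (B / n) := by
          rw [hBdef, mul_div_assoc, ENNReal.ofReal_mul (by positivity), ENNReal.ofReal_natCast]
  -- conclude by squeezing
  have hupper : Tendsto (fun n : ℕ => ENNReal.ofReal (B / n)) atTop (𝓝 0) := by
    have := ENNReal.tendsto_ofReal (tendsto_const_div_atTop_nhds_zero_nat B)
    simpa using this
  refine tendsto_of_tendsto_of_tendsto_of_le_of_le' tendsto_const_nhds hupper ?_ ?_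
  · exact Filter.Eventually.of_forall (fun n => zero_le)
  · filter_upwards [Filter.eventually_ge_atTop 1] with n hn using hmain n hn
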